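/- Let D ≥ 1 and let F(x,y) be the two-variable formal power series counting finite subtrees T of the D-regular tree that contain a fixed vertex e' and at most one fixed neighbor v of e', graded by x^{(number of non-leaves of T)} y^{(number of leaves of T other than e')}. Then F satisfies the functional equation F(x,y) = 1 + y − x + x·F(x,y)^{D−1}. In particular, F(x,y) = 1+y when D = 1, and F(x,y) = 1 + y/(1−x) when D = 2. -/

import Mathlib

/-- A finite subtree of the `D`-regular tree containing the distinguished vertex `e'`
and whose only possible neighbor of `e'` is the distinguished neighbor `v` is encoded by
a prefix-closed finite set `S` of paths descending from `v` (each vertex other than the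
parent direction has `D-1` children); `S = ∅` encodes the singleton tree `{e'}`.
`treeCount D i j` is the number of such subtrees with `i` non-leaves and `j` leaves
other than `e'` (a leaf is a vertex of degree ≤ 1 in the subtree; `e'` is never a
non-leaf, and a vertex of `S` is a non-leaf exactly when it has a child in `S`). -/
noncomputable def treeCount (D i j : ℕ) : ℕ :=
  Nat.card {S : Finset (List (Fin (D - 1))) //
    (∀ p ∈ S, ∀ q : List (Fin (D - 1)), q <+: p → q ∈ S) ∧
    Nat.card {p : List (Fin (D - 1)) // p ∈ S ∧ ∃ c, p ++ [c] ∈ S} = i ∧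
    Nat.card {p : List (Fin (D - 1)) // p ∈ S ∧ ¬ ∃ c, p ++ [c] ∈ S} = j}

/-- The two-variable generating series `F(x,y) = Σ_{i,j} a_{ij} x^i y^j` of the subtrees
above, with `x = X 0` recording non-leaves and `y = X 1` recording leaves other than `e'`. -/
noncomputable def treeSeries (D : ℕ) : MvPowerSeries (Fin 2) ℤ :=
  fun s => (treeCount D (s 0) (s 1) : ℤ)

open Finset

namespace TreeAux

variable {d : ℕ}

abbrev L (d : ℕ) := List (Fin d)

/-- prefix-closed -/
def Pref (S : Finset (L d)) : Prop := ∀ p ∈ S, ∀ q : L d, q <+: p → q ∈ S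

/-- internal vertices -/
def inn (S : Finset (L d)) : Finset (L d) := S.filter (fun p => ∃ c, p ++ [c] ∈ S)

/-- leaves -/
def lv (S : Finset (L d)) : Finset (L d) := S.filter (fun p => ¬ ∃ c, p ++ [c] ∈ S)

lemma card_inn_add_card_lv (S : Finset (L d)) : (inn S).card + (lv S).card = S.card :=
  Finset.card_filter_add_card_filter_not _

lemma pref_empty : Pref (∅ : Finset (L d)) := by intro p hp; simp at hp

@[simp] lemma inn_empty : (inn (∅ : Finset (L d))) = ∅ := rfl
@[simp] lemma lv_empty : (lv (∅ : Finset (L d))) = ∅ := rfl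

lemma nil_mem_of_pref {S : Finset (L d)} (hS : Pref S) (hne : S ≠ ∅) : [] ∈ S := by
  obtain ⟨p, hp⟩ := Finset.nonempty_iff_ne_empty.2 hne
  exact hS p hp [] (List.nil_prefix)

lemma length_lt_card {S : Finset (L d)} (hS : Pref S) {p : L d} (hp : p ∈ S) :
    p.length < S.card := by
  have hsub : (Finset.range (p.length + 1)).image (fun k => p.take k) ⊆ S := by
    intro q hq
    simp only [mem_image, mem_range] at hq
    obtain ⟨k, _, rfl⟩ := hq
    exact hS p hp _ (List.take_prefix k p)
  have hinj : Set.InjOn (fun k => p.take k) (Finset.range (p.length + 1)) := by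
    intro a ha b hb hab
    simp only [coe_range, Set.mem_Iio] at ha hb
    have : (p.take a).length = (p.take b).length := by simp only [hab]
    simpa [List.length_take, Nat.min_eq_left (Nat.lt_succ_iff.1 ha),
      Nat.min_eq_left (Nat.lt_succ_iff.1 hb)] using this
  calc p.length < p.length + 1 := Nat.lt_succ_self _
    _ = ((Finset.range (p.length + 1)).image (fun k => p.take k)).card := by
        rw [Finset.card_image_of_injOn hinj, Finset.card_range]
    _ ≤ S.card := Finset.card_le_card hsub

/-! ### Finiteness -/

def enc (n : ℕ) (p : L d) : Fin n → Option (Fin d) := fun k => p[(k : ℕ)]?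

def dec (n : ℕ) (f : Fin n → Option (Fin d)) : L d := (List.ofFn f).filterMap id

lemma dec_enc {n : ℕ} {p : L d} (h : p.length ≤ n) : dec n (enc n p) = p := by
  induction n generalizing p with
  | zero =>
    have : p = [] := List.length_eq_zero_iff.1 (Nat.le_zero.1 h)
    subst this
    rfl
  | succ n ih =>
    cases p with
    | nil =>
      have : enc (d := d) (n+1) [] = fun k => none := by
        funext k; simp [enc]
      rw [this]
      have h2 : dec (d := d) n (enc n []) = [] := ih (by simp)
      have : enc (d := d) n [] = fun k => none := by funext k; simp [enc]
      rw [this] at h2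
      simp only [dec, List.ofFn_succ] at h2 ⊢
      simpa using h2
    | cons a t =>
      have h1 : enc (n+1) (a :: t) 0 = some a := by simp [enc]
      have h2 : (fun k : Fin n => enc (n+1) (a :: t) k.succ) = enc n t := by
        funext k; simp [enc]
      simp only [dec, List.ofFn_succ, h1, List.filterMap_cons, id]
      rw [h2]
      have := ih (p := t) (by simpa using Nat.succ_le_succ_iff.1 (by simpa using h))
      simpa [dec] using this

lemma finite_aux (n : ℕ) : {S : Finset (L d) | Pref S ∧ S.card ≤ n}.Finite := by
  have hinj : Set.InjOn (fun S : Finset (L d) => S.image (enc n))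
      {S | Pref S ∧ S.card ≤ n} := by
    intro S hS S' hS' h
    have key : ∀ (T : Finset (L d)), Pref T → T.card ≤ n →
        (T.image (enc n)).image (dec n) = T := by
      intro T hT hcard
      rw [Finset.image_image]
      rw [show (dec n ∘ enc (d := d) n) = fun p => dec n (enc n p) from rfl]
      have : ∀ p ∈ T, dec n (enc n p) = p := fun p hp =>
        dec_enc (le_trans (le_of_lt (length_lt_card hT hp)) hcard)
      calc T.image (fun p => dec n (enc n p)) = T.image id := Finset.image_congr
            (fun p hp => this p hp)
        _ = T := Finset.image_id
    calc S = (S.image (enc n)).image (dec n) := (key S hS.1 hS.2).symm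
      _ = (S'.image (enc n)).image (dec n) := by
            simp only at h; rw [h]
      _ = S' := key S' hS'.1 hS'.2
  exact Set.Finite.of_finite_image (Set.toFinite _) hinj

lemma finite_subtype {q : Finset (L d) → Prop} {n : ℕ}
    (h : ∀ S, q S → Pref S ∧ S.card ≤ n) : Finite {S : Finset (L d) // q S} := by
  have := (finite_aux (d := d) n).to_subtype
  exact Finite.of_injective
    (fun S => (⟨S.1, h S.1 S.2⟩ : {S : Finset (L d) | Pref S ∧ S.card ≤ n}))
    (fun a b hab => Subtype.ext (by simpa using congrArg Subtype.val hab))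

lemma finite_subtype_pi {m : ℕ} {q : (Fin m → Finset (L d)) → Prop} {n : ℕ}
    (h : ∀ T, q T → ∀ c, Pref (T c) ∧ (T c).card ≤ n) :
    Finite {T : Fin m → Finset (L d) // q T} := by
  have : Finite {S : Finset (L d) | Pref S ∧ S.card ≤ n} := (finite_aux n).to_subtype
  exact Finite.of_injective
    (fun T => (fun c => (⟨T.1 c, h T.1 T.2 c⟩ : {S : Finset (L d) | Pref S ∧ S.card ≤ n})))
    (by
      intro a b hab
      apply Subtype.ext
      funext c
      simpa using congrArg Subtype.val (congrFun hab c))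


/-! ### Glue and split -/

def glue (T : Fin d → Finset (L d)) : Finset (L d) :=
  insert [] (Finset.univ.biUnion fun c => (T c).image (c :: ·))

def chld (S : Finset (L d)) (c : Fin d) : Finset (L d) :=
  (S.filter (fun p => p.head? = some c)).image List.tail

lemma mem_glue {T : Fin d → Finset (L d)} {p : L d} :
    p ∈ glue T ↔ p = [] ∨ ∃ c q, q ∈ T c ∧ p = c :: q := by
  simp only [glue, Finset.mem_insert, Finset.mem_biUnion, Finset.mem_univ, true_and,
    Finset.mem_image]
  constructor
  · rintro (rfl | ⟨c, q, hq, rfl⟩)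
    · exact Or.inl rfl
    · exact Or.inr ⟨c, q, hq, rfl⟩
  · rintro (rfl | ⟨c, q, hq, rfl⟩)
    · exact Or.inl rfl
    · exact Or.inr ⟨c, q, hq, rfl⟩

@[simp] lemma nil_mem_glue {T : Fin d → Finset (L d)} : [] ∈ glue T := by
  simp [glue]

@[simp] lemma cons_mem_glue {T : Fin d → Finset (L d)} {c : Fin d} {q : L d} :
    c :: q ∈ glue T ↔ q ∈ T c := by
  rw [mem_glue]
  constructor
  · rintro (h | ⟨c', q', hq', h⟩)
    · simp at h
    · obtain ⟨rfl, rfl⟩ := List.cons.inj h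
      exact hq'
  · intro h; exact Or.inr ⟨c, q, h, rfl⟩

@[simp] lemma mem_chld {S : Finset (L d)} {c : Fin d} {q : L d} :
    q ∈ chld S c ↔ c :: q ∈ S := by
  simp only [chld, Finset.mem_image, Finset.mem_filter]
  constructor
  · rintro ⟨p, ⟨hp, hh⟩, rfl⟩
    cases p with
    | nil => simp at hh
    | cons a t =>
      simp only [List.head?_cons, Option.some.injEq] at hh
      subst hh; simpa using hp
  · intro h
    exact ⟨c :: q, ⟨h, rfl⟩, rfl⟩

lemma glue_ne_empty {T : Fin d → Finset (L d)} : glue T ≠ ∅ :=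
  Finset.ne_empty_of_mem nil_mem_glue

lemma pref_chld {S : Finset (L d)} (hS : Pref S) (c : Fin d) : Pref (chld S c) := by
  intro p hp q hq
  rw [mem_chld] at hp ⊢
  rcases hq with ⟨r, rfl⟩
  exact hS _ hp _ ⟨r, by simp⟩

lemma pref_glue {T : Fin d → Finset (L d)} (hT : ∀ c, Pref (T c)) : Pref (glue T) := by
  intro p hp q hq
  rcases hq with ⟨r, rfl⟩
  rw [mem_glue] at hp
  rcases hp with h | ⟨c, q', hq', h⟩
  · have : q = [] := (List.append_eq_nil_iff.1 h).1
    simp [this]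
  · cases q with
    | nil => simp
    | cons a t =>
      simp only [List.cons_append] at h
      obtain ⟨rfl, h2⟩ := List.cons.inj h
      rw [cons_mem_glue]
      exact hT a _ hq' t ⟨r, h2⟩

lemma glue_chld {S : Finset (L d)} (hS : Pref S) (hne : S ≠ ∅) : glue (chld S) = S := by
  ext p
  rw [mem_glue]
  constructor
  · rintro (rfl | ⟨c, q, hq, rfl⟩)
    · exact nil_mem_of_pref hS hne
    · exact mem_chld.1 hq
  · intro hp
    cases p with
    | nil => exact Or.inl rfl
    | cons a t => exact Or.inr ⟨a, t, mem_chld.2 hp, rfl⟩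

lemma chld_glue {T : Fin d → Finset (L d)} (c : Fin d) : chld (glue T) c = T c := by
  ext q; simp

/-! ### Counting in glue -/

lemma filter_glue_card (T : Fin d → Finset (L d)) (Q : L d → Prop) [DecidablePred Q] :
    ((glue T).filter Q).card
      = (if Q [] then 1 else 0) + ∑ c, ((T c).filter (fun q => Q (c :: q))).card := by
  classical
  set B := Finset.univ.biUnion (fun c => (T c).image (c :: ·)) with hB
  have hnil : ([] : L d) ∉ B := by
    simp only [hB, Finset.mem_biUnion, Finset.mem_univ, true_and, Finset.mem_image]
    rintro ⟨c, q, hq, h⟩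
    simp at h
  have hcardB : (B.filter Q).card = ∑ c, ((T c).filter (fun q => Q (c :: q))).card := by
    rw [hB, Finset.filter_biUnion, Finset.card_biUnion]
    · apply Finset.sum_congr rfl
      intro c _
      rw [Finset.filter_image, Finset.card_image_of_injective _ (fun a b h => by
        simpa using h)]
    · intro c _ c' _ hcc
      simp only [Finset.disjoint_left, Finset.mem_filter, Finset.mem_image]
      rintro p ⟨⟨q, hq, rfl⟩, -⟩ ⟨⟨q', hq', h⟩, -⟩
      exact hcc (by simpa using (List.cons.injEq .. ▸ h.symm).1)
  rw [glue, Finset.filter_insert]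
  split_ifs with h
  · rw [Finset.card_insert_of_notMem (fun hc => hnil (Finset.mem_of_mem_filter _ hc)), hcardB]
    omega
  · rw [hcardB, Nat.zero_add]

lemma intl_glue_cons {T : Fin d → Finset (L d)} {c : Fin d} {q : L d} :
    (∃ c', (c :: q) ++ [c'] ∈ glue T) ↔ (∃ c', q ++ [c'] ∈ T c) := by
  constructor <;> rintro ⟨c', h⟩ <;> exact ⟨c', by simpa using h⟩

lemma intl_glue_nil {T : Fin d → Finset (L d)} (hT : ∀ c, Pref (T c)) :
    (∃ c', ([] : L d) ++ [c'] ∈ glue T) ↔ ¬ (∀ c, T c = ∅) := by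
  constructor
  · rintro ⟨c', h⟩ hall
    simp only [List.nil_append] at h
    have : ([] : L d) ∈ T c' := by simpa using h
    rw [hall c'] at this
    simp at this
  · intro h
    push_neg at h
    obtain ⟨c, hc⟩ := h
    exact ⟨c, by simpa using nil_mem_of_pref (hT c) (Finset.nonempty_iff_ne_empty.1 hc)⟩

lemma inn_glue (T : Fin d → Finset (L d)) (hT : ∀ c, Pref (T c)) :
    (inn (glue T)).card = (if ∀ c, T c = ∅ then 0 else 1) + ∑ c, (inn (T c)).card := by
  classical
  rw [inn, filter_glue_card]
  congr 1
  · rw [if_congr (intl_glue_nil hT) rfl rfl]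
    split_ifs <;> tauto
  · apply Finset.sum_congr rfl
    intro c _
    rw [inn]
    exact congrArg Finset.card (Finset.filter_congr fun q _ => by
      simpa using intl_glue_cons (T := T))

lemma lv_glue (T : Fin d → Finset (L d)) (hT : ∀ c, Pref (T c)) :
    (lv (glue T)).card = (if ∀ c, T c = ∅ then 1 else 0) + ∑ c, (lv (T c)).card := by
  classical
  rw [lv, filter_glue_card]
  congr 1
  · rw [if_congr (not_congr (intl_glue_nil hT)) rfl rfl]
    split_ifs <;> tauto
  · apply Finset.sum_congr rfl
    intro c _
    rw [lv]
    exact congrArg Finset.card (Finset.filter_congr fun q _ => by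
      simpa using not_congr (intl_glue_cons (T := T)))


/-! ### Counting -/

noncomputable def a (d i j : ℕ) : ℕ :=
  Nat.card {S : Finset (L d) // Pref S ∧ (inn S).card = i ∧ (lv S).card = j}

noncomputable def M (d m i j : ℕ) : ℕ :=
  Nat.card {T : Fin m → Finset (L d) // (∀ c, Pref (T c)) ∧
    (∑ c, (inn (T c)).card) = i ∧ (∑ c, (lv (T c)).card) = j}

lemma nat_card_split (α : Type*) [Finite α] (p : α → Prop) :
    Nat.card α = Nat.card {x // p x} + Nat.card {x // ¬ p x} := by
  classical
  have := Fintype.ofFinite α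
  rw [Nat.card_eq_fintype_card, Nat.card_eq_fintype_card, Nat.card_eq_fintype_card,
    Fintype.card_subtype, Fintype.card_subtype, ← Finset.card_univ,
    ← Finset.card_filter_add_card_filter_not (s := Finset.univ) (p := p)]

lemma nat_card_fiber_sum {α β : Type*} [Finite α] [DecidableEq β] (f : α → β) (s : Finset β)
    (h : ∀ x, f x ∈ s) :
    Nat.card α = ∑ b ∈ s, Nat.card {x // f x = b} := by
  classical
  have := Fintype.ofFinite α
  rw [Nat.card_eq_fintype_card, ← Finset.card_univ,
    Finset.card_eq_sum_card_fiberwise (t := s) (fun x _ => h x)]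
  refine Finset.sum_congr rfl fun b _ => ?_
  rw [Nat.card_eq_fintype_card, Fintype.card_subtype]

lemma finite_TT (d i j : ℕ) :
    Finite {S : Finset (L d) // Pref S ∧ (inn S).card = i ∧ (lv S).card = j} :=
  finite_subtype (n := i + j) (fun S hS => ⟨hS.1, by
    obtain ⟨-, h2, h3⟩ := hS
    have := card_inn_add_card_lv S
    omega⟩)

lemma nat_card_sub_sub {α : Type*} (p q : α → Prop) :
    Nat.card {x : {a // p a} // q x.1} = Nat.card {a // p a ∧ q a} :=
  Nat.card_congr (Equiv.subtypeSubtypeEquivSubtypeInter p q)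

lemma a_eq (d i j : ℕ) : a d i j = (if i = 0 ∧ j = 0 then 1 else 0)
    + Nat.card {S : Finset (L d) //
        (Pref S ∧ (inn S).card = i ∧ (lv S).card = j) ∧ S ≠ ∅} := by
  haveI := finite_TT d i j
  rw [a, nat_card_split _ (fun S => S.1 = (∅ : Finset (L d)))]
  congr 1
  · refine (nat_card_sub_sub
        (fun S : Finset (L d) => Pref S ∧ (inn S).card = i ∧ (lv S).card = j)
        (fun S => S = ∅)).trans ?_
    by_cases h : i = 0 ∧ j = 0
    · obtain ⟨rfl, rfl⟩ := h
      rw [if_pos ⟨rfl, rfl⟩]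
      haveI : Nonempty {S : Finset (L d) //
          (Pref S ∧ (inn S).card = 0 ∧ (lv S).card = 0) ∧ S = ∅} :=
        ⟨⟨∅, ⟨pref_empty, by simp, by simp⟩, rfl⟩⟩
      haveI : Subsingleton {S : Finset (L d) //
          (Pref S ∧ (inn S).card = 0 ∧ (lv S).card = 0) ∧ S = ∅} :=
        ⟨fun x y => Subtype.ext (x.2.2.trans y.2.2.symm)⟩
      exact Nat.card_unique
    · rw [if_neg h]
      haveI : IsEmpty {S : Finset (L d) //
          (Pref S ∧ (inn S).card = i ∧ (lv S).card = j) ∧ S = ∅} := by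
        refine ⟨fun x => h ?_⟩
        obtain ⟨S, ⟨h1, h2, h3⟩, rfl⟩ := x
        simp only [inn_empty, lv_empty, Finset.card_empty] at h2 h3
        exact ⟨h2.symm, h3.symm⟩
      exact Nat.card_of_isEmpty
  · exact (nat_card_sub_sub
        (fun S : Finset (L d) => Pref S ∧ (inn S).card = i ∧ (lv S).card = j)
        (fun S => ¬ S = ∅))

def glueEquiv (d i j : ℕ) :
    {T : Fin d → Finset (L d) // (∀ c, Pref (T c)) ∧
        ((if ∀ c, T c = ∅ then 0 else 1) + ∑ c, (inn (T c)).card = i) ∧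
        ((if ∀ c, T c = ∅ then 1 else 0) + ∑ c, (lv (T c)).card = j)} ≃
    {S : Finset (L d) // (Pref S ∧ (inn S).card = i ∧ (lv S).card = j) ∧ S ≠ ∅} where
  toFun T := ⟨glue T.1, ⟨pref_glue T.2.1,
      by rw [inn_glue _ T.2.1]; exact T.2.2.1,
      by rw [lv_glue _ T.2.1]; exact T.2.2.2⟩, glue_ne_empty⟩
  invFun S := ⟨chld S.1, fun c => pref_chld S.2.1.1 c, by
      have hg : glue (chld S.1) = S.1 := glue_chld S.2.1.1 S.2.2
      have h1 := inn_glue (chld S.1) (fun c => pref_chld S.2.1.1 c)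
      have h2 := lv_glue (chld S.1) (fun c => pref_chld S.2.1.1 c)
      rw [hg] at h1 h2
      exact ⟨h1.symm.trans S.2.1.2.1, h2.symm.trans S.2.1.2.2⟩⟩
  left_inv T := Subtype.ext (funext fun c => chld_glue c)
  right_inv S := Subtype.ext (glue_chld S.2.1.1 S.2.2)

lemma sum_inn_empty {m : ℕ} {T : Fin m → Finset (L d)} (h : ∀ c, T c = ∅) :
    ∑ c, (inn (T c)).card = 0 :=
  Finset.sum_eq_zero (fun c _ => by rw [h c]; simp)

lemma sum_lv_empty {m : ℕ} {T : Fin m → Finset (L d)} (h : ∀ c, T c = ∅) :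
    ∑ c, (lv (T c)).card = 0 :=
  Finset.sum_eq_zero (fun c _ => by rw [h c]; simp)

lemma finite_glue_side (d i j : ℕ) :
    Finite {T : Fin d → Finset (L d) // (∀ c, Pref (T c)) ∧
        ((if ∀ c, T c = ∅ then 0 else 1) + ∑ c, (inn (T c)).card = i) ∧
        ((if ∀ c, T c = ∅ then 1 else 0) + ∑ c, (lv (T c)).card = j)} :=
  finite_subtype_pi (n := i + j) (fun T hT c => ⟨hT.1 c, by
    obtain ⟨-, hi, hj⟩ := hT
    have h1 : (inn (T c)).card ≤ ∑ c, (inn (T c)).card :=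
      Finset.single_le_sum (f := fun c => (inn (T c)).card)
        (fun _ _ => Nat.zero_le _) (Finset.mem_univ c)
    have h2 : (lv (T c)).card ≤ ∑ c, (lv (T c)).card :=
      Finset.single_le_sum (f := fun c => (lv (T c)).card)
        (fun _ _ => Nat.zero_le _) (Finset.mem_univ c)
    have h3 := card_inn_add_card_lv (T c)
    split_ifs at hi hj <;> omega⟩)

lemma finite_M (d m i j : ℕ) :
    Finite {T : Fin m → Finset (L d) // (∀ c, Pref (T c)) ∧
      (∑ c, (inn (T c)).card) = i ∧ (∑ c, (lv (T c)).card) = j} :=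
  finite_subtype_pi (n := i + j) (fun T hT c => ⟨hT.1 c, by
    obtain ⟨-, hi, hj⟩ := hT
    have h1 : (inn (T c)).card ≤ ∑ c, (inn (T c)).card :=
      Finset.single_le_sum (f := fun c => (inn (T c)).card)
        (fun _ _ => Nat.zero_le _) (Finset.mem_univ c)
    have h2 : (lv (T c)).card ≤ ∑ c, (lv (T c)).card :=
      Finset.single_le_sum (f := fun c => (lv (T c)).card)
        (fun _ _ => Nat.zero_le _) (Finset.mem_univ c)
    have h3 := card_inn_add_card_lv (T c)
    omega⟩)

lemma card_ne_empty_eq (d i j : ℕ) :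
    Nat.card {S : Finset (L d) //
        (Pref S ∧ (inn S).card = i ∧ (lv S).card = j) ∧ S ≠ ∅}
    = (if i = 0 ∧ j = 1 then 1 else 0)
      + Nat.card {T : Fin d → Finset (L d) // (∀ c, Pref (T c)) ∧ ¬(∀ c, T c = ∅)
          ∧ 1 + ∑ c, (inn (T c)).card = i ∧ ∑ c, (lv (T c)).card = j} := by
  rw [← Nat.card_congr (glueEquiv d i j)]
  haveI := finite_glue_side d i j
  rw [nat_card_split _ (fun T => ∀ c, T.1 c = ∅)]
  congr 1
  · refine (nat_card_sub_sub
        (fun T : Fin d → Finset (L d) => (∀ c, Pref (T c)) ∧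
          ((if ∀ c, T c = ∅ then 0 else 1) + ∑ c, (inn (T c)).card = i) ∧
          ((if ∀ c, T c = ∅ then 1 else 0) + ∑ c, (lv (T c)).card = j))
        (fun T => ∀ c, T c = ∅)).trans ?_
    by_cases h : i = 0 ∧ j = 1
    · obtain ⟨rfl, rfl⟩ := h
      rw [if_pos ⟨rfl, rfl⟩]
      haveI : Nonempty {T : Fin d → Finset (L d) // ((∀ c, Pref (T c)) ∧
          ((if ∀ c, T c = ∅ then 0 else 1) + ∑ c, (inn (T c)).card = 0) ∧
          ((if ∀ c, T c = ∅ then 1 else 0) + ∑ c, (lv (T c)).card = 1)) ∧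
          (∀ c, T c = ∅)} := by
        refine ⟨⟨fun _ => ∅, ⟨fun c => pref_empty, ?_, ?_⟩, fun c => rfl⟩⟩
        · rw [if_pos (fun c => rfl), sum_inn_empty (fun c => rfl)]
        · rw [if_pos (fun c => rfl), sum_lv_empty (fun c => rfl)]
      haveI : Subsingleton {T : Fin d → Finset (L d) // ((∀ c, Pref (T c)) ∧
          ((if ∀ c, T c = ∅ then 0 else 1) + ∑ c, (inn (T c)).card = 0) ∧
          ((if ∀ c, T c = ∅ then 1 else 0) + ∑ c, (lv (T c)).card = 1)) ∧
          (∀ c, T c = ∅)} :=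
        ⟨fun x y => Subtype.ext (funext fun c => (x.2.2 c).trans (y.2.2 c).symm)⟩
      exact Nat.card_unique
    · rw [if_neg h]
      haveI : IsEmpty {T : Fin d → Finset (L d) // ((∀ c, Pref (T c)) ∧
          ((if ∀ c, T c = ∅ then 0 else 1) + ∑ c, (inn (T c)).card = i) ∧
          ((if ∀ c, T c = ∅ then 1 else 0) + ∑ c, (lv (T c)).card = j)) ∧
          (∀ c, T c = ∅)} := by
        refine ⟨fun x => h ?_⟩
        obtain ⟨T, ⟨-, hi, hj⟩, hAE⟩ := x
        rw [if_pos hAE, sum_inn_empty hAE] at hi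
        rw [if_pos hAE, sum_lv_empty hAE] at hj
        omega
      exact Nat.card_of_isEmpty
  · refine (nat_card_sub_sub
        (fun T : Fin d → Finset (L d) => (∀ c, Pref (T c)) ∧
          ((if ∀ c, T c = ∅ then 0 else 1) + ∑ c, (inn (T c)).card = i) ∧
          ((if ∀ c, T c = ∅ then 1 else 0) + ∑ c, (lv (T c)).card = j))
        (fun T => ¬ ∀ c, T c = ∅)).trans ?_
    refine Nat.card_congr (Equiv.subtypeEquivRight fun T => ?_)
    constructor
    · rintro ⟨⟨h1, h2, h3⟩, h4⟩
      rw [if_neg h4] at h2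
      rw [if_neg h4, zero_add] at h3
      exact ⟨h1, h4, h2, h3⟩
    · rintro ⟨h1, h4, h2, h3⟩
      refine ⟨⟨h1, ?_, ?_⟩, h4⟩
      · rw [if_neg h4]; exact h2
      · rw [if_neg h4, zero_add]; exact h3

lemma M_eq (d m i j : ℕ) : M d m i j = (if i = 0 ∧ j = 0 then 1 else 0)
    + Nat.card {T : Fin m → Finset (L d) // (∀ c, Pref (T c)) ∧ ¬(∀ c, T c = ∅)
        ∧ (∑ c, (inn (T c)).card) = i ∧ (∑ c, (lv (T c)).card) = j} := by
  haveI := finite_M d m i j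
  rw [M, nat_card_split _ (fun T => ∀ c, T.1 c = ∅)]
  congr 1
  · refine (nat_card_sub_sub
        (fun T : Fin m → Finset (L d) => (∀ c, Pref (T c)) ∧
          (∑ c, (inn (T c)).card) = i ∧ (∑ c, (lv (T c)).card) = j)
        (fun T => ∀ c, T c = ∅)).trans ?_
    by_cases h : i = 0 ∧ j = 0
    · obtain ⟨rfl, rfl⟩ := h
      rw [if_pos ⟨rfl, rfl⟩]
      haveI : Nonempty {T : Fin m → Finset (L d) // ((∀ c, Pref (T c)) ∧
          (∑ c, (inn (T c)).card) = 0 ∧ (∑ c, (lv (T c)).card) = 0) ∧ (∀ c, T c = ∅)} :=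
        ⟨⟨fun _ => ∅, ⟨fun c => pref_empty, sum_inn_empty (fun c => rfl),
          sum_lv_empty (fun c => rfl)⟩, fun c => rfl⟩⟩
      haveI : Subsingleton {T : Fin m → Finset (L d) // ((∀ c, Pref (T c)) ∧
          (∑ c, (inn (T c)).card) = 0 ∧ (∑ c, (lv (T c)).card) = 0) ∧ (∀ c, T c = ∅)} :=
        ⟨fun x y => Subtype.ext (funext fun c => (x.2.2 c).trans (y.2.2 c).symm)⟩
      exact Nat.card_unique
    · rw [if_neg h]
      haveI : IsEmpty {T : Fin m → Finset (L d) // ((∀ c, Pref (T c)) ∧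
          (∑ c, (inn (T c)).card) = i ∧ (∑ c, (lv (T c)).card) = j) ∧ (∀ c, T c = ∅)} := by
        refine ⟨fun x => h ?_⟩
        obtain ⟨T, ⟨-, hi, hj⟩, hAE⟩ := x
        rw [sum_inn_empty hAE] at hi
        rw [sum_lv_empty hAE] at hj
        exact ⟨hi.symm, hj.symm⟩
      exact Nat.card_of_isEmpty
  · refine (nat_card_sub_sub
        (fun T : Fin m → Finset (L d) => (∀ c, Pref (T c)) ∧
          (∑ c, (inn (T c)).card) = i ∧ (∑ c, (lv (T c)).card) = j)
        (fun T => ¬ ∀ c, T c = ∅)).trans ?_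
    refine Nat.card_congr (Equiv.subtypeEquivRight fun T => ?_)
    tauto

lemma claimC (d i j : ℕ) :
    a d i j + (if i = 1 ∧ j = 0 then 1 else 0)
      = (if i = 0 ∧ j = 0 then 1 else 0) + (if i = 0 ∧ j = 1 then 1 else 0)
        + (if 1 ≤ i then M d d (i - 1) j else 0) := by
  rw [a_eq, card_ne_empty_eq]
  rcases Nat.eq_zero_or_pos i with rfl | hi
  · haveI : IsEmpty {T : Fin d → Finset (L d) // (∀ c, Pref (T c)) ∧ ¬(∀ c, T c = ∅)
        ∧ 1 + ∑ c, (inn (T c)).card = 0 ∧ ∑ c, (lv (T c)).card = j} :=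
      ⟨fun x => by have h := x.2.2.2.1; omega⟩
    rw [Nat.card_of_isEmpty]
    norm_num
  · have hrw : Nat.card {T : Fin d → Finset (L d) // (∀ c, Pref (T c)) ∧ ¬(∀ c, T c = ∅)
        ∧ 1 + ∑ c, (inn (T c)).card = i ∧ ∑ c, (lv (T c)).card = j}
        = Nat.card {T : Fin d → Finset (L d) // (∀ c, Pref (T c)) ∧ ¬(∀ c, T c = ∅)
        ∧ (∑ c, (inn (T c)).card) = i - 1 ∧ (∑ c, (lv (T c)).card) = j} :=
      Nat.card_congr (Equiv.subtypeEquivRight fun T => by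
        constructor <;> rintro ⟨h1, h2, h3, h4⟩ <;> exact ⟨h1, h2, by omega, h4⟩)
    have hi' : 1 ≤ i := hi
    rw [hrw, if_pos hi', M_eq]
    generalize Nat.card {T : Fin d → Finset (L d) // (∀ c, Pref (T c)) ∧ ¬(∀ c, T c = ∅)
        ∧ (∑ c, (inn (T c)).card) = i - 1 ∧ (∑ c, (lv (T c)).card) = j} = N
    clear hrw
    split_ifs <;> omega


/-! ### Pairs as finsupps -/

noncomputable def pairF (i j : ℕ) : Fin 2 →₀ ℕ := Finsupp.equivFunOnFinite.symm ![i, j]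

@[simp] lemma pairF_zero (i j : ℕ) : pairF i j 0 = i := rfl
@[simp] lemma pairF_one (i j : ℕ) : pairF i j 1 = j := rfl

lemma pairF_eta (w : Fin 2 →₀ ℕ) : pairF (w 0) (w 1) = w := by
  rw [pairF, Equiv.symm_apply_eq]
  funext x
  fin_cases x <;> rfl

lemma fin2_finsupp_eq_iff (s w : Fin 2 →₀ ℕ) : s = w ↔ s 0 = w 0 ∧ s 1 = w 1 := by
  constructor
  · rintro rfl; exact ⟨rfl, rfl⟩
  · rintro ⟨h0, h1⟩
    apply DFunLike.ext
    intro x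
    fin_cases x
    · exact h0
    · exact h1

noncomputable def cnt (S : Finset (L d)) : Fin 2 →₀ ℕ := pairF (inn S).card (lv S).card

noncomputable def cntT {m : ℕ} (T : Fin m → Finset (L d)) : Fin 2 →₀ ℕ :=
  pairF (∑ c, (inn (T c)).card) (∑ c, (lv (T c)).card)

/-! ### The fiber equivalence -/

def fiberEquiv (d m : ℕ) (s u v : Fin 2 →₀ ℕ) (huv : u + v = s) :
    {X : {T : Fin (m+1) → Finset (L d) // (∀ c, Pref (T c)) ∧
        (∑ c, (inn (T c)).card) = s 0 ∧ (∑ c, (lv (T c)).card) = s 1} //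
      (cnt (X.1 0), cntT (fun c => X.1 c.succ)) = (u, v)} ≃
    ({S : Finset (L d) // Pref S ∧ (inn S).card = u 0 ∧ (lv S).card = u 1} ×
     {T : Fin m → Finset (L d) // (∀ c, Pref (T c)) ∧
        (∑ c, (inn (T c)).card) = v 0 ∧ (∑ c, (lv (T c)).card) = v 1}) where
  toFun := fun ⟨⟨T, hT⟩, hX⟩ =>
    have hu : cnt (T 0) = u := congrArg Prod.fst hX
    have hv : cntT (fun c => T c.succ) = v := congrArg Prod.snd hX
    (⟨T 0, hT.1 0, DFunLike.congr_fun hu 0, DFunLike.congr_fun hu 1⟩,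
     ⟨fun c => T c.succ, fun c => hT.1 c.succ,
        DFunLike.congr_fun hv 0, DFunLike.congr_fun hv 1⟩)
  invFun := fun ⟨⟨S, hS⟩, ⟨R, hR⟩⟩ =>
    ⟨⟨Fin.cons S R, by
        refine ⟨?_, ?_, ?_⟩
        · intro c
          induction c using Fin.cases with
          | zero => simpa using hS.1
          | succ c => simpa using hR.1 c
        · rw [Fin.sum_univ_succ]
          simp only [Fin.cons_zero, Fin.cons_succ]
          rw [hS.2.1, hR.2.1, ← Finsupp.add_apply, huv]
        · rw [Fin.sum_univ_succ]
          simp only [Fin.cons_zero, Fin.cons_succ]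
          rw [hS.2.2, hR.2.2, ← Finsupp.add_apply, huv]⟩, by
      have h1 : cnt ((Fin.cons S R : Fin (m+1) → Finset (L d)) 0) = u := by
        rw [Fin.cons_zero, cnt, hS.2.1, hS.2.2, pairF_eta]
      have h2 : cntT (fun c => (Fin.cons S R : Fin (m+1) → Finset (L d)) c.succ) = v := by
        have he : (fun c => (Fin.cons S R : Fin (m+1) → Finset (L d)) c.succ) = R := by
          funext c; rw [Fin.cons_succ]
        rw [he, cntT, hR.2.1, hR.2.2, pairF_eta]
      rw [h1, h2]⟩
  left_inv := fun ⟨⟨T, hT⟩, hX⟩ => Subtype.ext (Subtype.ext (Fin.cons_self_tail T))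
  right_inv := fun ⟨⟨S, hS⟩, ⟨R, hR⟩⟩ => by
    refine Prod.ext (Subtype.ext ?_) (Subtype.ext (funext fun c => ?_))
    · show (Fin.cons S R : Fin (m+1) → Finset (L d)) 0 = S
      rw [Fin.cons_zero]
    · show (Fin.cons S R : Fin (m+1) → Finset (L d)) c.succ = R c
      rw [Fin.cons_succ]

lemma Msucc (d m : ℕ) (s : Fin 2 →₀ ℕ) :
    M d (m+1) (s 0) (s 1)
      = ∑ p ∈ Finset.HasAntidiagonal.antidiagonal s, a d (p.1 0) (p.1 1) * M d m (p.2 0) (p.2 1) := by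
  haveI := finite_M d (m+1) (s 0) (s 1)
  have hmem : ∀ X : {T : Fin (m+1) → Finset (L d) // (∀ c, Pref (T c)) ∧
      (∑ c, (inn (T c)).card) = s 0 ∧ (∑ c, (lv (T c)).card) = s 1},
      (cnt (X.1 0), cntT (fun c => X.1 c.succ)) ∈ Finset.HasAntidiagonal.antidiagonal s := by
    rintro ⟨T, h1, h2, h3⟩
    rw [Finset.HasAntidiagonal.mem_antidiagonal]
    apply DFunLike.ext
    intro x
    rw [Finsupp.add_apply]
    fin_cases x
    · show cnt (T 0) 0 + cntT (fun c => T c.succ) 0 = s 0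
      rw [← h2, Fin.sum_univ_succ]
      rfl
    · show cnt (T 0) 1 + cntT (fun c => T c.succ) 1 = s 1
      rw [← h3, Fin.sum_univ_succ]
      rfl
  rw [M, nat_card_fiber_sum _ _ hmem]
  refine Finset.sum_congr rfl fun p hp => ?_
  rw [Finset.HasAntidiagonal.mem_antidiagonal] at hp
  rw [a, M, ← Nat.card_prod]
  exact Nat.card_congr (fiberEquiv d m s p.1 p.2 hp)

/-! ### Series -/

noncomputable def aSer (d : ℕ) : MvPowerSeries (Fin 2) ℤ := fun s => (a d (s 0) (s 1) : ℤ)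

lemma coeff_aSer (d : ℕ) (s : Fin 2 →₀ ℕ) :
    MvPowerSeries.coeff s (aSer d) = (a d (s 0) (s 1) : ℤ) := rfl

lemma coeff_pow_aSer (d m : ℕ) (s : Fin 2 →₀ ℕ) :
    MvPowerSeries.coeff s (aSer d ^ m) = (M d m (s 0) (s 1) : ℤ) := by
  induction m generalizing s with
  | zero =>
    rw [pow_zero, MvPowerSeries.coeff_one, M_eq]
    haveI : IsEmpty {T : Fin 0 → Finset (L d) // (∀ c, Pref (T c)) ∧ ¬(∀ c, T c = ∅)
        ∧ (∑ c, (inn (T c)).card) = s 0 ∧ (∑ c, (lv (T c)).card) = s 1} :=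
      ⟨fun x => x.2.2.1 (fun c => c.elim0)⟩
    rw [Nat.card_of_isEmpty]
    have e1 : (s = 0) ↔ (s 0 = 0 ∧ s 1 = 0) := by
      rw [fin2_finsupp_eq_iff]; simp
    rw [if_congr e1 rfl rfl]
    split_ifs <;> simp
  | succ m ih =>
    rw [pow_succ', MvPowerSeries.coeff_mul, Msucc]
    push_cast
    refine Finset.sum_congr rfl fun p hp => ?_
    rw [coeff_aSer, ih]

lemma aSer_eq (d : ℕ) :
    aSer d = 1 + MvPowerSeries.X 1 - MvPowerSeries.X 0
      + MvPowerSeries.X 0 * (aSer d) ^ d := by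
  apply MvPowerSeries.ext
  intro s
  rw [map_add, map_sub, map_add, MvPowerSeries.coeff_one, MvPowerSeries.coeff_X,
    MvPowerSeries.coeff_X]
  have hX : (MvPowerSeries.X 0 : MvPowerSeries (Fin 2) ℤ)
      = MvPowerSeries.monomial (Finsupp.single 0 1) 1 := rfl
  rw [hX, MvPowerSeries.coeff_monomial_mul, coeff_pow_aSer, coeff_aSer]
  have e1 : (s = 0) ↔ (s 0 = 0 ∧ s 1 = 0) := by
    rw [fin2_finsupp_eq_iff]; simp
  have e2 : (s = Finsupp.single 1 1) ↔ (s 0 = 0 ∧ s 1 = 1) := by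
    rw [fin2_finsupp_eq_iff]
    norm_num [Finsupp.single_apply]
  have e3 : (s = Finsupp.single 0 1) ↔ (s 0 = 1 ∧ s 1 = 0) := by
    rw [fin2_finsupp_eq_iff]
    norm_num [Finsupp.single_apply]
  have e4 : (Finsupp.single 0 1 ≤ s) ↔ 1 ≤ s 0 := Finsupp.single_le_iff
  have e5 : ((s - Finsupp.single 0 1 : Fin 2 →₀ ℕ)) 0 = s 0 - 1 := by
    rw [Finsupp.tsub_apply, Finsupp.single_eq_same]
  have e6 : ((s - Finsupp.single 0 1 : Fin 2 →₀ ℕ)) 1 = s 1 := by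
    rw [Finsupp.tsub_apply, Finsupp.single_eq_of_ne (by norm_num)]
    rfl
  rw [if_congr e1 rfl rfl, if_congr e2 rfl rfl, if_congr e3 rfl rfl, if_congr e4 rfl rfl,
    e5, e6]
  have h := claimC d (s 0) (s 1)
  have h' := congrArg (Nat.cast : ℕ → ℤ) h
  push_cast at h'
  split_ifs at h' ⊢ <;> linarith

lemma nat_card_filter (S : Finset (L d)) (Q : L d → Prop) [DecidablePred Q] :
    Nat.card {p : L d // p ∈ S ∧ Q p} = (S.filter Q).card := by
  rw [← Nat.card_eq_finsetCard]
  exact Nat.card_congr (Equiv.subtypeEquivRight fun p => (Finset.mem_filter).symm)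

end TreeAux

open TreeAux MvPowerSeries

lemma treeCount_eq (D i j : ℕ) : treeCount D i j = a (D - 1) i j := by
  rw [treeCount, a]
  apply Nat.card_congr
  apply Equiv.subtypeEquivRight
  intro S
  have h1 : Nat.card {p : List (Fin (D-1)) // p ∈ S ∧ ∃ c, p ++ [c] ∈ S}
      = (inn S).card := nat_card_filter S _
  have h2 : Nat.card {p : List (Fin (D-1)) // p ∈ S ∧ ¬ ∃ c, p ++ [c] ∈ S}
      = (lv S).card := nat_card_filter S _
  rw [h1, h2]
  exact Iff.rfl

lemma treeSeries_eq (D : ℕ) : treeSeries D = aSer (D - 1) :=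
  funext fun s => congrArg (Nat.cast : ℕ → ℤ) (treeCount_eq D (s 0) (s 1))

/-- the series `F` satisfies `F = 1 + y - x + x·F^{D-1}`; in particular
`F = 1 + y` when `D = 1`, and `F = 1 + y/(1-x)` (i.e. `F·(1-x) = 1 + y - x`) when
`D = 2`. -/
theorem stmt10 (D : ℕ) (hD : 1 ≤ D) :
    (treeSeries D
      = 1 + MvPowerSeries.X 1 - MvPowerSeries.X 0
        + MvPowerSeries.X 0 * (treeSeries D) ^ (D - 1)) ∧
    (D = 1 → treeSeries D = 1 + MvPowerSeries.X 1) ∧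
    (D = 2 → treeSeries D * (1 - MvPowerSeries.X 0)
      = 1 + MvPowerSeries.X 1 - MvPowerSeries.X 0) := by
  have h1 : treeSeries D
      = 1 + MvPowerSeries.X 1 - MvPowerSeries.X 0
        + MvPowerSeries.X 0 * (treeSeries D) ^ (D - 1) := by
    rw [treeSeries_eq]
    exact aSer_eq (D - 1)
  refine ⟨h1, ?_, ?_⟩
  · rintro rfl
    norm_num at h1
    linear_combination h1
  · rintro rfl
    norm_num at h1
    linear_combination h1
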